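/- arXiv:2311.11924 — 2 statements merged into one kernel-verified Lean document; each statement's English description precedes it below -/
import Mathlib

section
/- Let Z be a standard Gaussian and define φ(x) = E[tanh²(β√x Z)] for x ≥ 0 (i.e., h = 0). If |β| ≤ 1, then 0 is the only fixed point of φ on [0,∞) and φ(x) < x for all x > 0. If |β| > 1, then φ has exactly two fixed points 0 and q > 0, with φ(x) > x for x ∈ (0,q) and φ(x) < x for x > q. -/
open MeasureTheory ProbabilityTheory

/-- `φ(x) = E[tanh²(h + β √x Z)]`, `Z` a standard Gaussian. Here we use `h = 0`. -/
noncomputable def phi (h β x : ℝ) : ℝ :=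
  ∫ z, Real.tanh (h + β * Real.sqrt x * z) ^ 2 ∂(gaussianReal 0 1)

open scoped ENNReal NNReal

lemma my_continuous_tanh : Continuous Real.tanh := by
  have h : Real.tanh = fun x => Real.sinh x / Real.cosh x :=
    funext fun x => Real.tanh_eq_sinh_div_cosh x
  rw [h]
  exact Real.continuous_sinh.div Real.continuous_cosh fun x => (Real.cosh_pos x).ne'

lemma my_tanh_pos {t : ℝ} (ht : 0 < t) : 0 < Real.tanh t := by
  rw [Real.tanh_eq_sinh_div_cosh]
  exact div_pos (by rwa [Real.sinh_pos_iff]) (Real.cosh_pos t)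

lemma my_tanh_nonneg {t : ℝ} (ht : 0 ≤ t) : 0 ≤ Real.tanh t := by
  rcases ht.eq_or_lt with h | h
  · simp [← h]
  · exact (my_tanh_pos h).le

lemma my_hasDerivAt_tanh (t : ℝ) : HasDerivAt Real.tanh (1 - Real.tanh t ^ 2) t := by
  have h := (Real.hasDerivAt_sinh t).div (Real.hasDerivAt_cosh t) (Real.cosh_pos t).ne'
  have hc := (Real.cosh_pos t).ne'
  have hsq := Real.cosh_sq_sub_sinh_sq t
  have e : (Real.cosh t * Real.cosh t - Real.sinh t * Real.sinh t) / Real.cosh t ^ 2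
      = 1 - Real.tanh t ^ 2 := by
    rw [Real.tanh_eq_sinh_div_cosh, div_pow]
    field_simp
  rw [← e]
  exact h.congr_of_eventuallyEq (Filter.Eventually.of_forall fun x =>
    Real.tanh_eq_sinh_div_cosh x)

lemma my_tanh_lt_self {t : ℝ} (ht : 0 < t) : Real.tanh t < t := by
  have key : StrictMonoOn (fun s => s - Real.tanh s) (Set.Ici 0) := by
    apply strictMonoOn_of_deriv_pos (convex_Ici 0)
      ((continuous_id.sub my_continuous_tanh).continuousOn)
    intro s hs
    rw [interior_Ici] at hs
    have hd : HasDerivAt (fun s => s - Real.tanh s) (1 - (1 - Real.tanh s ^ 2)) s :=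
      (hasDerivAt_id s).sub (my_hasDerivAt_tanh s)
    rw [show (id - Real.tanh) = fun s => s - Real.tanh s from rfl, hd.deriv]
    have := my_tanh_pos hs
    nlinarith
  have h := key Set.self_mem_Ici (Set.mem_Ici.mpr ht.le) ht
  simp only [Real.tanh_zero, sub_zero] at h
  linarith

lemma my_tanh_le_self {t : ℝ} (ht : 0 ≤ t) : Real.tanh t ≤ t := by
  rcases ht.eq_or_lt with h | h
  · simp [← h]
  · exact (my_tanh_lt_self h).le

lemma my_tanh_sq_lt_one (t : ℝ) : Real.tanh t ^ 2 < 1 := by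
  have h1 : Real.sinh t < Real.cosh t := Real.sinh_lt_cosh t
  have h2 : -Real.cosh t < Real.sinh t := by
    have := Real.sinh_lt_cosh (-t)
    rw [Real.sinh_neg, Real.cosh_neg] at this
    linarith
  have hc := Real.cosh_pos t
  rw [Real.tanh_eq_sinh_div_cosh, div_pow, div_lt_one (by positivity)]
  nlinarith

lemma my_tanh_sq_le_one (t : ℝ) : Real.tanh t ^ 2 ≤ 1 := (my_tanh_sq_lt_one t).le

lemma my_sq_tanh_abs (t : ℝ) : Real.tanh |t| ^ 2 = Real.tanh t ^ 2 := by
  rcases abs_cases t with ⟨h, _⟩ | ⟨h, _⟩ <;> rw [h]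
  rw [Real.tanh_neg]
  ring

lemma my_tanh_sq_lt_sq {t : ℝ} (ht : t ≠ 0) : Real.tanh t ^ 2 < t ^ 2 := by
  have h : 0 < |t| := abs_pos.mpr ht
  have h1 : Real.tanh |t| < |t| := my_tanh_lt_self h
  have h2 : 0 ≤ Real.tanh |t| := my_tanh_nonneg (abs_nonneg t)
  have h3 := pow_lt_pow_left₀ h1 h2 two_ne_zero
  rwa [my_sq_tanh_abs, sq_abs] at h3

lemma my_tanh_sq_le_sq (t : ℝ) : Real.tanh t ^ 2 ≤ t ^ 2 := by
  rcases eq_or_ne t 0 with h | h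
  · simp [h]
  · exact (my_tanh_sq_lt_sq h).le

lemma my_tanh_div_strictAnti : StrictAntiOn (fun t => Real.tanh t / t) (Set.Ioi 0) := by
  apply strictAntiOn_of_deriv_neg (convex_Ioi 0)
    (my_continuous_tanh.continuousOn.div continuousOn_id fun x hx => ne_of_gt hx)
  intro s hs
  rw [interior_Ioi] at hs
  have hs0 : (0 : ℝ) < s := hs
  have hd : HasDerivAt (fun t => Real.tanh t / t)
      (((1 - Real.tanh s ^ 2) * s - Real.tanh s * 1) / s ^ 2) s :=
    (my_hasDerivAt_tanh s).div (hasDerivAt_id s) hs0.ne'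
  rw [show Real.tanh / id = fun t => Real.tanh t / t from rfl, hd.deriv]
  apply div_neg_of_neg_of_pos _ (by positivity)
  have h1 : s < Real.sinh s := Real.self_lt_sinh_iff.mpr hs0
  have h2 : 1 ≤ Real.cosh s := Real.one_le_cosh s
  have hsinh : 0 < Real.sinh s := Real.sinh_pos_iff.mpr hs0
  have hc := Real.cosh_pos s
  have hsq := Real.cosh_sq_sub_sinh_sq s
  have key : s < Real.sinh s * Real.cosh s :=
    lt_of_lt_of_le h1 (le_mul_of_one_le_right hsinh.le h2)
  have e0 : 1 - Real.tanh s ^ 2 = 1 / Real.cosh s ^ 2 := by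
    rw [Real.tanh_eq_sinh_div_cosh, div_pow]
    field_simp
    linarith
  rw [e0, Real.tanh_eq_sinh_div_cosh, mul_one, div_mul_eq_mul_div, one_mul, sub_neg,
    div_lt_div_iff₀ (by positivity) hc]
  nlinarith

lemma my_tanh_sq_div_lt {u v : ℝ} (hu : 0 < u) (huv : u < v) :
    Real.tanh v ^ 2 / v ^ 2 < Real.tanh u ^ 2 / u ^ 2 := by
  have hv : 0 < v := hu.trans huv
  have h1 : Real.tanh v / v < Real.tanh u / u :=
    my_tanh_div_strictAnti (Set.mem_Ioi.mpr hu) (Set.mem_Ioi.mpr hv) huv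
  have h2 : 0 ≤ Real.tanh v / v := div_nonneg (my_tanh_nonneg hv.le) hv.le
  have h3 := pow_lt_pow_left₀ h1 h2 two_ne_zero
  rwa [div_pow, div_pow] at h3

lemma my_tanh_ge {t : ℝ} (ht : 0 ≤ t) : t - t ^ 3 / 3 ≤ Real.tanh t := by
  have hD : ∀ s : ℝ, HasDerivAt (fun u => Real.tanh u - u + u ^ 3 / 3)
      (s ^ 2 - Real.tanh s ^ 2) s := by
    intro s
    have h := ((my_hasDerivAt_tanh s).sub (hasDerivAt_id s)).add
      ((hasDerivAt_pow 3 s).div_const 3)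
    convert h using 1
    · rfl
    · rfl
    · rfl
    push_cast
    ring
  have key : MonotoneOn (fun s => Real.tanh s - s + s ^ 3 / 3) (Set.Ici 0) := by
    apply monotoneOn_of_deriv_nonneg (convex_Ici 0)
      ((my_continuous_tanh.sub continuous_id).add (by continuity)).continuousOn
      (fun s _ => (hD s).differentiableAt.differentiableWithinAt)
    intro s hs
    rw [interior_Ici] at hs
    rw [show (Real.tanh - id + fun u : ℝ => u ^ 3 / 3)
      = fun u => Real.tanh u - u + u ^ 3 / 3 from rfl, (hD s).deriv]
    have h1 := my_tanh_le_self (le_of_lt hs)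
    have h2 := my_tanh_nonneg (le_of_lt (Set.mem_Ioi.mp hs))
    nlinarith
  have h := key Set.self_mem_Ici (Set.mem_Ici.mpr ht) ht
  simp only [Real.tanh_zero] at h
  norm_num at h
  linarith

lemma my_tanh_sq_ge (t : ℝ) : t ^ 2 - t ^ 4 ≤ Real.tanh t ^ 2 := by
  have main : ∀ s : ℝ, 0 ≤ s → s ^ 2 - s ^ 4 ≤ Real.tanh s ^ 2 := by
    intro s hs
    rcases le_or_gt 1 s with h1 | h1
    · have hs2 : 1 ≤ s ^ 2 := by nlinarith
      nlinarith [sq_nonneg (Real.tanh s), mul_nonneg (sq_nonneg s) (sub_nonneg.mpr hs2)]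
    · have h2 := my_tanh_ge hs
      have hs2 : s ^ 2 ≤ 1 := by nlinarith
      have h3 : 0 ≤ s - s ^ 3 / 3 := by nlinarith [mul_le_mul_of_nonneg_left hs2 hs]
      nlinarith [pow_le_pow_left₀ h3 h2 2, sq_nonneg (s ^ 2), sq_nonneg (s ^ 3)]
  rcases le_or_gt 0 t with h | h
  · exact main t h
  · have := main (-t) (by linarith)
    rw [Real.tanh_neg] at this
    have e4 : (-t) ^ 4 = t ^ 4 := by ring
    have e2 : (-t) ^ 2 = t ^ 2 := by ring
    rw [e4, e2] at this
    simpa using this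

lemma my_ratio_pointwise {β x y z : ℝ} (hβ : β ≠ 0) (hz : z ≠ 0) (hx : 0 < x) (hxy : x < y) :
    Real.tanh (β * Real.sqrt y * z) ^ 2 / y < Real.tanh (β * Real.sqrt x * z) ^ 2 / x := by
  set c := |β * z| with hc
  have hc0 : 0 < c := abs_pos.mpr (mul_ne_zero hβ hz)
  have hy : 0 < y := hx.trans hxy
  have hu : 0 < c * Real.sqrt x := mul_pos hc0 (Real.sqrt_pos.mpr hx)
  have huv : c * Real.sqrt x < c * Real.sqrt y :=
    mul_lt_mul_of_pos_left (Real.sqrt_lt_sqrt hx.le hxy) hc0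
  have key := my_tanh_sq_div_lt hu huv
  have ex : ∀ w : ℝ, 0 ≤ w →
      Real.tanh (β * Real.sqrt w * z) ^ 2 = Real.tanh (c * Real.sqrt w) ^ 2 := by
    intro w hw
    rw [← my_sq_tanh_abs (β * Real.sqrt w * z)]
    congr 2
    rw [show β * Real.sqrt w * z = β * z * Real.sqrt w by ring, abs_mul,
      abs_of_nonneg (Real.sqrt_nonneg w)]
  have ew : ∀ w : ℝ, 0 < w →
      Real.tanh (c * Real.sqrt w) ^ 2 / w
        = c ^ 2 * (Real.tanh (c * Real.sqrt w) ^ 2 / (c * Real.sqrt w) ^ 2) := by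
    intro w hw
    rw [mul_pow, Real.sq_sqrt hw.le]
    field_simp
  rw [ex x hx.le, ex y hy.le, ew x hx, ew y hy]
  exact mul_lt_mul_of_pos_left key (by positivity)

lemma my_integrable_pow_exp (n : ℕ) :
    Integrable (fun x : ℝ => x ^ n * Real.exp (-(1/2 : ℝ) * x ^ 2)) := by
  have h := integrable_rpow_mul_exp_neg_mul_sq (b := (1/2 : ℝ)) (by norm_num) (s := (n : ℝ))
    (lt_of_lt_of_le (by norm_num) (Nat.cast_nonneg n))
  refine h.congr ?_
  filter_upwards with x
  rw [Real.rpow_natCast]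

lemma my_tendsto_mul_exp_top :
    Filter.Tendsto (fun x : ℝ => x * Real.exp (-(1/2 : ℝ) * x ^ 2)) Filter.atTop (nhds 0) := by
  have h := Real.tendsto_pow_mul_exp_neg_atTop_nhds_zero 1
  apply squeeze_zero' (g := fun x : ℝ => x ^ 1 * Real.exp (-x))
  · filter_upwards [Filter.eventually_ge_atTop (0 : ℝ)] with x hx
    positivity
  · filter_upwards [Filter.eventually_ge_atTop (2 : ℝ)] with x hx
    have h1 : -(1/2 : ℝ) * x ^ 2 ≤ -x := by nlinarith
    have h2 := Real.exp_le_exp.mpr h1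
    have hx0 : (0 : ℝ) ≤ x := by linarith
    simpa [pow_one] using mul_le_mul_of_nonneg_left h2 hx0
  · exact h

lemma my_tendsto_neg_mul_exp_top :
    Filter.Tendsto (fun x : ℝ => -x * Real.exp (-(1/2 : ℝ) * x ^ 2)) Filter.atTop (nhds 0) := by
  have := my_tendsto_mul_exp_top.neg
  simpa using this

lemma my_tendsto_neg_mul_exp_bot :
    Filter.Tendsto (fun x : ℝ => -x * Real.exp (-(1/2 : ℝ) * x ^ 2)) Filter.atBot (nhds 0) := by
  have h := my_tendsto_mul_exp_top.comp Filter.tendsto_neg_atBot_atTop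
  refine h.congr fun x => ?_
  simp only [Function.comp]
  rw [neg_sq]

lemma my_integral_sq_exp :
    ∫ x : ℝ, x ^ 2 * Real.exp (-(1/2 : ℝ) * x ^ 2) = Real.sqrt (2 * Real.pi) := by
  have hI := my_integrable_pow_exp 2
  have hg : Integrable (fun x : ℝ => Real.exp (-(1/2 : ℝ) * x ^ 2)) :=
    integrable_exp_neg_mul_sq (by norm_num)
  have hderiv : ∀ x : ℝ, HasDerivAt (fun x : ℝ => -x * Real.exp (-(1/2 : ℝ) * x ^ 2))
      (x ^ 2 * Real.exp (-(1/2 : ℝ) * x ^ 2) - Real.exp (-(1/2 : ℝ) * x ^ 2)) x := by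
    intro x
    have h1 : HasDerivAt (fun x : ℝ => -(1/2 : ℝ) * x ^ 2) (-(1/2 : ℝ) * (2 * x)) x :=
      ((hasDerivAt_pow 2 x).const_mul (-(1/2 : ℝ))).congr_deriv (by push_cast; ring)
    have h2 := h1.exp
    have h3 := ((hasDerivAt_id x).neg).mul h2
    refine h3.congr_deriv ?_
    simp only [Pi.neg_apply, id_eq]
    ring
  have h0 := integral_of_hasDerivAt_of_tendsto hderiv (hI.sub hg)
    my_tendsto_neg_mul_exp_bot my_tendsto_neg_mul_exp_top
  rw [integral_sub hI hg] at h0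
  have hgauss : ∫ x : ℝ, Real.exp (-(1/2 : ℝ) * x ^ 2) = Real.sqrt (2 * Real.pi) := by
    rw [integral_gaussian]
    congr 1
    rw [div_div_eq_mul_div, div_one]
    ring
  linarith [h0, hgauss]

lemma my_gaussianPDF_eq :
    gaussianPDF 0 1 = fun x => ((gaussianPDFReal 0 1 x).toNNReal : ℝ≥0∞) := by
  funext x
  rfl

lemma my_pdf_meas : Measurable fun x => (gaussianPDFReal 0 1 x).toNNReal :=
  (measurable_gaussianPDFReal 0 1).real_toNNReal

lemma my_integral_gaussian_eq (f : ℝ → ℝ) :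
    ∫ z, f z ∂(gaussianReal 0 1) = ∫ x, gaussianPDFReal 0 1 x * f x := by
  rw [gaussianReal_of_var_ne_zero 0 one_ne_zero, my_gaussianPDF_eq,
    integral_withDensity_eq_integral_smul my_pdf_meas]
  congr 1
  funext x
  rw [NNReal.smul_def, Real.coe_toNNReal _ (gaussianPDFReal_nonneg 0 1 x), smul_eq_mul]

lemma my_integrable_gaussian_iff (f : ℝ → ℝ) :
    Integrable f (gaussianReal 0 1) ↔
      Integrable (fun x => gaussianPDFReal 0 1 x * f x) volume := by
  rw [gaussianReal_of_var_ne_zero 0 one_ne_zero, my_gaussianPDF_eq,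
    integrable_withDensity_iff_integrable_smul my_pdf_meas]
  constructor <;> intro h <;> refine h.congr ?_ <;> filter_upwards with x <;>
    rw [NNReal.smul_def, Real.coe_toNNReal _ (gaussianPDFReal_nonneg 0 1 x), smul_eq_mul]

lemma my_pdfReal_eq (x : ℝ) :
    gaussianPDFReal 0 1 x = (Real.sqrt (2 * Real.pi))⁻¹ * Real.exp (-(1/2 : ℝ) * x ^ 2) := by
  simp only [gaussianPDFReal, NNReal.coe_one, mul_one, sub_zero]
  congr 1
  ring

lemma my_integrable_pow_gaussian (n : ℕ) :
    Integrable (fun z : ℝ => z ^ n) (gaussianReal 0 1) := by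
  rw [my_integrable_gaussian_iff]
  have h := (my_integrable_pow_exp n).const_mul (Real.sqrt (2 * Real.pi))⁻¹
  refine h.congr ?_
  filter_upwards with x
  rw [my_pdfReal_eq]
  ring

lemma my_integral_sq_gaussian : ∫ z, z ^ 2 ∂(gaussianReal 0 1) = 1 := by
  rw [my_integral_gaussian_eq]
  have : ∀ x : ℝ, gaussianPDFReal 0 1 x * x ^ 2
      = (Real.sqrt (2 * Real.pi))⁻¹ * (x ^ 2 * Real.exp (-(1/2 : ℝ) * x ^ 2)) := by
    intro x
    rw [my_pdfReal_eq]
    ring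
  calc ∫ x, gaussianPDFReal 0 1 x * x ^ 2
      = ∫ x, (Real.sqrt (2 * Real.pi))⁻¹ * (x ^ 2 * Real.exp (-(1/2 : ℝ) * x ^ 2)) := by
        exact integral_congr_ae (Filter.Eventually.of_forall this)
    _ = (Real.sqrt (2 * Real.pi))⁻¹ * ∫ x, x ^ 2 * Real.exp (-(1/2 : ℝ) * x ^ 2) :=
        integral_const_mul _ _
    _ = 1 := by
        rw [my_integral_sq_exp]
        have h : Real.sqrt (2 * Real.pi) ≠ 0 := by positivity
        field_simp

lemma my_integrable_bounded {f : ℝ → ℝ} (hm : AEStronglyMeasurable f (gaussianReal 0 1))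
    {C : ℝ} (hb : ∀ z, |f z| ≤ C) : Integrable f (gaussianReal 0 1) :=
  (integrable_const C).mono' hm (Filter.Eventually.of_forall fun z => by
    simpa [Real.norm_eq_abs] using hb z)

lemma my_cont_integrand (β x : ℝ) :
    Continuous fun z => Real.tanh (β * Real.sqrt x * z) ^ 2 :=
  (my_continuous_tanh.comp (continuous_const.mul continuous_id)).pow 2

lemma my_integrable_integrand (β x : ℝ) :
    Integrable (fun z => Real.tanh (β * Real.sqrt x * z) ^ 2) (gaussianReal 0 1) :=
  my_integrable_bounded (my_cont_integrand β x).aestronglyMeasurable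
    (C := 1) (fun z => by
      rw [abs_of_nonneg (sq_nonneg _)]
      exact my_tanh_sq_le_one _)

lemma my_phi_eq (β x : ℝ) :
    phi 0 β x = ∫ z, Real.tanh (β * Real.sqrt x * z) ^ 2 ∂(gaussianReal 0 1) := by
  simp [phi]

lemma my_phi_zero (β : ℝ) : phi 0 β 0 = 0 := by
  rw [my_phi_eq]
  simp

lemma my_phi_le_one (β x : ℝ) : phi 0 β x ≤ 1 := by
  rw [my_phi_eq]
  calc ∫ z, Real.tanh (β * Real.sqrt x * z) ^ 2 ∂(gaussianReal 0 1)
      ≤ ∫ _, (1 : ℝ) ∂(gaussianReal 0 1) :=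
        integral_mono (my_integrable_integrand β x) (integrable_const 1)
          fun z => my_tanh_sq_le_one _
    _ = 1 := by simp

lemma my_integral_lt {f g : ℝ → ℝ} (hf : Integrable f (gaussianReal 0 1))
    (hg : Integrable g (gaussianReal 0 1)) (hle : ∀ z, f z ≤ g z)
    (hlt : ∀ z, z ≠ 0 → f z < g z) :
    ∫ z, f z ∂(gaussianReal 0 1) < ∫ z, g z ∂(gaussianReal 0 1) := by
  have hpos : 0 < ∫ z, (g z - f z) ∂(gaussianReal 0 1) := by
    rw [integral_pos_iff_support_of_nonneg_ae
      (Filter.Eventually.of_forall fun z => sub_nonneg.mpr (hle z)) (hg.sub hf)]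
    have hsub : ({0}ᶜ : Set ℝ) ⊆ Function.support fun z => g z - f z := fun z hz =>
      (sub_pos.mpr (hlt z hz)).ne'
    refine lt_of_lt_of_le ?_ (measure_mono hsub)
    have h0 : (gaussianReal 0 1) {0} = 0 :=
      gaussianReal_absolutelyContinuous 0 one_ne_zero (measure_singleton 0)
    rw [prob_compl_eq_one_sub (measurableSet_singleton 0), h0]
    norm_num
  rw [integral_sub hg hf] at hpos
  linarith

lemma my_phi_lt_sq_mul {β x : ℝ} (hβ : β ≠ 0) (hx : 0 < x) : phi 0 β x < β ^ 2 * x := by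
  rw [my_phi_eq]
  have hg : Integrable (fun z : ℝ => β ^ 2 * x * z ^ 2) (gaussianReal 0 1) :=
    (my_integrable_pow_gaussian 2).const_mul _
  have key : ∫ z, β ^ 2 * x * z ^ 2 ∂(gaussianReal 0 1) = β ^ 2 * x := by
    rw [integral_const_mul, my_integral_sq_gaussian, mul_one]
  rw [← key]
  apply my_integral_lt (my_integrable_integrand β x) hg
  · intro z
    calc Real.tanh (β * Real.sqrt x * z) ^ 2 ≤ (β * Real.sqrt x * z) ^ 2 :=
          my_tanh_sq_le_sq _
      _ = β ^ 2 * x * z ^ 2 := by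
          rw [mul_pow, mul_pow, Real.sq_sqrt hx.le]
  · intro z hz
    have hne : β * Real.sqrt x * z ≠ 0 :=
      mul_ne_zero (mul_ne_zero hβ (Real.sqrt_pos.mpr hx).ne') hz
    calc Real.tanh (β * Real.sqrt x * z) ^ 2 < (β * Real.sqrt x * z) ^ 2 :=
          my_tanh_sq_lt_sq hne
      _ = β ^ 2 * x * z ^ 2 := by
          rw [mul_pow, mul_pow, Real.sq_sqrt hx.le]

lemma my_phi_ge {β x : ℝ} (hx : 0 ≤ x) :
    β ^ 2 * x - β ^ 4 * x ^ 2 * (∫ z, z ^ 4 ∂(gaussianReal 0 1)) ≤ phi 0 β x := by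
  rw [my_phi_eq]
  have h4 := my_integrable_pow_gaussian 4
  have h2 := my_integrable_pow_gaussian 2
  have hint : Integrable (fun z : ℝ => β ^ 2 * x * z ^ 2 - β ^ 4 * x ^ 2 * z ^ 4)
      (gaussianReal 0 1) := (h2.const_mul _).sub (h4.const_mul _)
  have key : ∫ z, (β ^ 2 * x * z ^ 2 - β ^ 4 * x ^ 2 * z ^ 4) ∂(gaussianReal 0 1)
      = β ^ 2 * x - β ^ 4 * x ^ 2 * ∫ z, z ^ 4 ∂(gaussianReal 0 1) := by
    rw [integral_sub (h2.const_mul _) (h4.const_mul _), integral_const_mul,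
      integral_const_mul, my_integral_sq_gaussian, mul_one]
  rw [← key]
  apply integral_mono hint (my_integrable_integrand β x)
  intro z
  have e2 : (β * Real.sqrt x * z) ^ 2 = β ^ 2 * x * z ^ 2 := by
    rw [mul_pow, mul_pow, Real.sq_sqrt hx]
  have e4 : (β * Real.sqrt x * z) ^ 4 = β ^ 4 * x ^ 2 * z ^ 4 := by
    rw [mul_pow, mul_pow, show (4 : ℕ) = 2 * 2 from rfl, pow_mul, pow_mul, pow_mul,
      Real.sq_sqrt hx]
  calc β ^ 2 * x * z ^ 2 - β ^ 4 * x ^ 2 * z ^ 4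
      = (β * Real.sqrt x * z) ^ 2 - (β * Real.sqrt x * z) ^ 4 := by rw [e2, e4]
    _ ≤ Real.tanh (β * Real.sqrt x * z) ^ 2 := my_tanh_sq_ge _

lemma my_phi_div_strictAnti {β : ℝ} (hβ : β ≠ 0) :
    StrictAntiOn (fun x => phi 0 β x / x) (Set.Ioi 0) := by
  intro x hx y hy hxy
  have hx0 : (0 : ℝ) < x := hx
  have hy0 : (0 : ℝ) < y := hy
  simp only
  rw [my_phi_eq, my_phi_eq, ← integral_div, ← integral_div]
  apply my_integral_lt ((my_integrable_integrand β y).div_const y)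
    ((my_integrable_integrand β x).div_const x)
  · intro z
    rcases eq_or_ne z 0 with rfl | hz
    · simp
    · exact (my_ratio_pointwise hβ hz hx0 hxy).le
  · intro z hz
    exact my_ratio_pointwise hβ hz hx0 hxy

lemma my_phi_continuous (β : ℝ) : Continuous (phi 0 β) := by
  have he : phi 0 β
      = fun x => ∫ z, Real.tanh (β * Real.sqrt x * z) ^ 2 ∂(gaussianReal 0 1) :=
    funext (my_phi_eq β)
  rw [he]
  apply continuous_of_dominated (bound := fun _ => (1 : ℝ))
  · intro x
    exact (my_cont_integrand β x).aestronglyMeasurable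
  · intro x
    filter_upwards with z
    rw [Real.norm_eq_abs, abs_of_nonneg (sq_nonneg _)]
    exact my_tanh_sq_le_one _
  · exact integrable_const 1
  · filter_upwards with z
    exact (my_continuous_tanh.comp
      ((continuous_const.mul Real.continuous_sqrt).mul continuous_const)).pow 2

/-- For `h = 0`: if `|β| ≤ 1`, then `0` is the only fixed point of `φ` on `[0,∞)` and
`φ(x) < x` for all `x > 0`. If `|β| > 1`, then `φ` has exactly the two fixed points `0` and
some `q > 0`, with `φ(x) > x` on `(0,q)` and `φ(x) < x` on `(q,∞)`. -/
theorem stmt4 (β : ℝ) :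
    (|β| ≤ 1 →
      (phi 0 β 0 = 0 ∧ (∀ x, 0 ≤ x → phi 0 β x = x → x = 0)) ∧
      ∀ x, 0 < x → phi 0 β x < x) ∧
    (1 < |β| →
      ∃ q : ℝ, 0 < q ∧ phi 0 β 0 = 0 ∧ phi 0 β q = q ∧
        (∀ x, 0 ≤ x → phi 0 β x = x → x = 0 ∨ x = q) ∧
        (∀ x, 0 < x → x < q → x < phi 0 β x) ∧
        (∀ x, q < x → phi 0 β x < x)) := by
  constructor
  · intro hβ
    have hlt : ∀ x, 0 < x → phi 0 β x < x := by
      intro x hx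
      rcases eq_or_ne β 0 with rfl | hβ0
      · rw [my_phi_eq]
        simpa using hx
      · have h1 := my_phi_lt_sq_mul hβ0 hx
        have h2 : β ^ 2 ≤ 1 := by nlinarith [sq_abs β, abs_nonneg β]
        nlinarith
    refine ⟨⟨my_phi_zero β, fun x hx hfix => ?_⟩, hlt⟩
    by_contra h
    have hx0 : 0 < x := lt_of_le_of_ne hx (Ne.symm h)
    exact absurd hfix (ne_of_lt (hlt x hx0))
  · intro hβ
    have hβ0 : β ≠ 0 := fun h => by simp [h] at hβ; linarith
    have hb2 : 1 < β ^ 2 := by nlinarith [sq_abs β]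
    set M := ∫ z, z ^ 4 ∂(gaussianReal 0 1) with hM
    have hM0 : 0 ≤ M := integral_nonneg fun z => by positivity
    set x₀ := (β ^ 2 - 1) / (β ^ 4 * (M + 1)) with hx₀
    have hβ4 : 0 < β ^ 4 := by positivity
    have hx₀pos : 0 < x₀ := div_pos (by linarith) (by positivity)
    have hsmall : ∀ x, 0 < x → x < x₀ → x < phi 0 β x := by
      intro x hx hxx
      have h1 := my_phi_ge (β := β) hx.le
      rw [← hM] at h1
      have h2 : x * (β ^ 4 * (M + 1)) < β ^ 2 - 1 := (lt_div_iff₀ (by positivity)).mp hxx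
      nlinarith [mul_pos hx hx, mul_pos (mul_pos hβ4 hx) hx]
    set x₁ := min (x₀ / 2) 1 with hx₁
    have hx₁pos : 0 < x₁ := lt_min (by linarith) one_pos
    have hx₁lt : x₁ < x₀ := lt_of_le_of_lt (min_le_left _ _) (by linarith)
    have hf1 : x₁ < phi 0 β x₁ := hsmall x₁ hx₁pos hx₁lt
    have hf2 : phi 0 β 2 < 2 := lt_of_le_of_lt (my_phi_le_one β 2) one_lt_two
    have hcont : ContinuousOn (fun x => phi 0 β x - x) (Set.Icc x₁ 2) :=
      ((my_phi_continuous β).sub continuous_id).continuousOn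
    have hx₁2 : x₁ ≤ 2 := le_trans (min_le_right _ _) one_le_two
    have hmem : (0 : ℝ) ∈ Set.Icc ((fun x => phi 0 β x - x) 2) ((fun x => phi 0 β x - x) x₁) :=
      ⟨by simp only; linarith, by simp only; linarith⟩
    obtain ⟨q, hqmem, hq⟩ := intermediate_value_Icc' hx₁2 hcont hmem
    have hq0 : 0 < q := lt_of_lt_of_le hx₁pos hqmem.1
    have hfix : phi 0 β q = q := by
      have : phi 0 β q - q = 0 := hq
      linarith
    have hanti := my_phi_div_strictAnti hβ0
    have hψq : phi 0 β q / q = 1 := by rw [hfix, div_self hq0.ne']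
    have hlow : ∀ x, 0 < x → x < q → x < phi 0 β x := by
      intro x hx hxq
      have h := hanti (Set.mem_Ioi.mpr hx) (Set.mem_Ioi.mpr hq0) hxq
      simp only [hψq] at h
      exact (one_lt_div hx).mp h
    have hhigh : ∀ x, q < x → phi 0 β x < x := by
      intro x hxq
      have hx0 : 0 < x := hq0.trans hxq
      have h := hanti (Set.mem_Ioi.mpr hq0) (Set.mem_Ioi.mpr hx0) hxq
      simp only [hψq] at h
      exact (div_lt_one hx0).mp h
    refine ⟨q, hq0, my_phi_zero β, hfix, ?_, hlow, hhigh⟩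
    intro x hx hfx
    rcases hx.eq_or_lt with h | hx0
    · exact Or.inl h.symm
    · right
      rcases lt_trichotomy x q with h | h | h
      · have := hlow x hx0 h
        rw [hfx] at this
        exact absurd this (lt_irrefl x)
      · exact h
      · have := hhigh x h
        rw [hfx] at this
        exact absurd this (lt_irrefl x)
end

section
/- Let g : ℝ → ℝ be even, integrable against Gaussians, decreasing on [0,∞), with bounded derivative, and let X be a centered Gaussian with variance σ² > 0. Then the function h ↦ E[g(h + X)] is increasing on (−∞,0], decreasing on [0,∞), and hence maximal at h = 0. -/
open MeasureTheory ProbabilityTheory Real Set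
open scoped NNReal ENNReal

private lemma cosh_mul_cosh' (u w : ℝ) :
    Real.cosh u * Real.cosh w = (Real.cosh (u + w) + Real.cosh (u - w)) / 2 := by
  rw [Real.cosh_add, Real.cosh_sub]; ring

private lemma cosh_cross' {a b y₁ y₂ : ℝ} (ha : 0 ≤ a) (hab : a ≤ b) (hy₁ : 0 ≤ y₁)
    (hy : y₁ ≤ y₂) :
    Real.cosh (a * y₂) * Real.cosh (b * y₁) ≤ Real.cosh (a * y₁) * Real.cosh (b * y₂) := by
  have hb : 0 ≤ b := le_trans ha hab
  have hy₂ : 0 ≤ y₂ := le_trans hy₁ hy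
  rw [cosh_mul_cosh', cosh_mul_cosh']
  have h1 : Real.cosh (a * y₂ + b * y₁) ≤ Real.cosh (a * y₁ + b * y₂) := by
    rw [Real.cosh_le_cosh, abs_of_nonneg (by positivity), abs_of_nonneg (by positivity)]
    nlinarith
  have h2 : Real.cosh (a * y₂ - b * y₁) ≤ Real.cosh (a * y₁ - b * y₂) := by
    rw [Real.cosh_le_cosh, abs_of_nonpos (by nlinarith : a * y₁ - b * y₂ ≤ 0), abs_le]
    constructor <;> nlinarith
  linarith

private lemma crossing' {A B a b : ℝ} (hB : 0 < B) (hBA : B ≤ A) (ha : 0 ≤ a) (hab : a < b) :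
    ∃ y₀ : ℝ, 0 ≤ y₀ ∧
      (∀ y, 0 ≤ y → y < y₀ → 0 ≤ A * Real.cosh (a * y) - B * Real.cosh (b * y)) ∧
      (∀ y, y₀ < y → A * Real.cosh (a * y) - B * Real.cosh (b * y) ≤ 0) := by
  have hA : 0 < A := lt_of_lt_of_le hB hBA
  set S : Set ℝ := {y | 0 ≤ y ∧ B * Real.cosh (b * y) ≤ A * Real.cosh (a * y)} with hS
  have h0S : (0:ℝ) ∈ S := by simp [hS, hBA]
  have hdown : ∀ ⦃y₁ y₂ : ℝ⦄, y₂ ∈ S → 0 ≤ y₁ → y₁ ≤ y₂ → y₁ ∈ S := by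
    intro y₁ y₂ hy₂ h0 h12
    refine ⟨h0, ?_⟩
    have hc := cosh_cross' ha hab.le h0 h12
    have hcb2 : 0 < Real.cosh (b * y₂) := Real.cosh_pos (b * y₂)
    have hcb1 : 0 < Real.cosh (b * y₁) := Real.cosh_pos (b * y₁)
    have h1 : B * Real.cosh (b * y₂) * Real.cosh (b * y₁)
        ≤ A * Real.cosh (a * y₂) * Real.cosh (b * y₁) :=
      mul_le_mul_of_nonneg_right hy₂.2 hcb1.le
    have h2 : A * (Real.cosh (a * y₂) * Real.cosh (b * y₁))
        ≤ A * (Real.cosh (a * y₁) * Real.cosh (b * y₂)) :=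
      mul_le_mul_of_nonneg_left hc hA.le
    have h3 : B * Real.cosh (b * y₁) * Real.cosh (b * y₂)
        ≤ A * Real.cosh (a * y₁) * Real.cosh (b * y₂) := by nlinarith
    exact le_of_mul_le_mul_right h3 hcb2
  -- a bound for S
  set Y : ℝ := |Real.log (2 * A / B)| / (b - a) + 1 with hY
  have hba0 : 0 < b - a := by linarith
  have hY0 : 0 ≤ Y := by
    rw [hY]
    have h2 : 0 ≤ |Real.log (2 * A / B)| / (b - a) :=
      div_nonneg (abs_nonneg _) hba0.le
    linarith
  have hYS : ¬ Y ∈ S := by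
    intro hmem
    have hba : 0 < b - a := hba0
    have h2AB : (0:ℝ) < 2 * A / B := by positivity
    have hlog : Real.log (2 * A / B) < (b - a) * Y := by
      have : (b - a) * Y = |Real.log (2 * A / B)| + (b - a) := by
        rw [hY, mul_add, mul_one, mul_div_assoc', mul_comm (b - a), mul_div_assoc, div_self hba.ne', mul_one]
      rw [this]
      have := le_abs_self (Real.log (2 * A / B))
      linarith
    have hexp : 2 * A / B < Real.exp ((b - a) * Y) := by
      calc 2 * A / B = Real.exp (Real.log (2 * A / B)) := (Real.exp_log h2AB).symm
        _ < Real.exp ((b - a) * Y) := Real.exp_lt_exp.mpr hlog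
    have hexp' : 2 * A * Real.exp (a * Y) < B * Real.exp (b * Y) := by
      have h1 : 2 * A < B * Real.exp ((b - a) * Y) := by
        rw [div_lt_iff₀ hB] at hexp; linarith [hexp]
      have hme : Real.exp ((b - a) * Y) * Real.exp (a * Y) = Real.exp (b * Y) := by
        rw [← Real.exp_add]; congr 1; ring
      calc 2 * A * Real.exp (a * Y) = 2 * (A * Real.exp (a * Y)) := by ring
        _ < B * Real.exp ((b - a) * Y) * Real.exp (a * Y) := by
            have := mul_lt_mul_of_pos_right h1 (Real.exp_pos (a * Y))
            linarith [this]
        _ = B * Real.exp (b * Y) := by rw [mul_assoc, hme]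
    have hc1 : Real.cosh (a * Y) ≤ Real.exp (a * Y) := by
      rw [Real.cosh_eq]
      have : Real.exp (-(a * Y)) ≤ Real.exp (a * Y) := by
        apply Real.exp_le_exp.mpr; nlinarith
      linarith
    have hc2 : Real.exp (b * Y) / 2 ≤ Real.cosh (b * Y) := by
      rw [Real.cosh_eq]
      have := (Real.exp_pos (-(b * Y))).le
      linarith
    have : A * Real.cosh (a * Y) < B * Real.cosh (b * Y) := by
      calc A * Real.cosh (a * Y) ≤ A * Real.exp (a * Y) := by
            exact mul_le_mul_of_nonneg_left hc1 hA.le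
        _ < B * (Real.exp (b * Y) / 2) := by linarith
        _ ≤ B * Real.cosh (b * Y) := mul_le_mul_of_nonneg_left hc2 hB.le
    linarith [hmem.2]
  have hbddS : ∀ y ∈ S, y ≤ Y := by
    intro y hy
    by_contra hcon
    push_neg at hcon
    exact hYS (hdown hy hY0 hcon.le)
  have hbdd : BddAbove S := ⟨Y, fun y hy => hbddS y hy⟩
  refine ⟨sSup S, le_csSup hbdd h0S, ?_, ?_⟩
  · intro y h0y hlt
    obtain ⟨s, hsS, hys⟩ := exists_lt_of_lt_csSup ⟨0, h0S⟩ hlt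
    have := (hdown hsS h0y hys.le).2
    linarith
  · intro y hy
    by_contra hcon
    push_neg at hcon
    have hyS : y ∈ S := ⟨le_trans (le_csSup hbdd h0S) hy.le, by linarith⟩
    exact absurd (le_csSup hbdd hyS) (not_le.mpr hy)

/-- Let `g : ℝ → ℝ` be even, decreasing on `[0,∞)`, differentiable with bounded derivative,
integrable against Gaussians, and let `X` be a centered Gaussian of variance `v > 0`. Then
`h ↦ E[g(h + X)]` is increasing on `(−∞,0]`, decreasing on `[0,∞)`, hence maximal at `h = 0`. -/
theorem stmt15 (g : ℝ → ℝ) (hev : ∀ z, g (-z) = g z)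
    (hdec : AntitoneOn g (Set.Ici 0))
    (hdiff : Differentiable ℝ g)
    (hbd : ∃ C, ∀ x, |deriv g x| ≤ C)
    (v : NNReal) (hv : 0 < v)
    (hint : ∀ h : ℝ, Integrable (fun x => g (h + x)) (gaussianReal 0 v)) :
    MonotoneOn (fun h => ∫ x, g (h + x) ∂(gaussianReal 0 v)) (Set.Iic 0) ∧
    AntitoneOn (fun h => ∫ x, g (h + x) ∂(gaussianReal 0 v)) (Set.Ici 0) ∧
    ∀ h : ℝ, (∫ x, g (h + x) ∂(gaussianReal 0 v)) ≤ ∫ x, g (0 + x) ∂(gaussianReal 0 v) := by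
  have hv0 : (0:ℝ) < (v:ℝ) := hv
  set f : ℝ → ℝ := gaussianPDFReal 0 v with hfdef
  have hfmeas : Measurable f := measurable_gaussianPDFReal 0 v
  have hfnn : ∀ x, 0 ≤ f x := gaussianPDFReal_nonneg 0 v
  have hμ : gaussianReal 0 v = volume.withDensity (gaussianPDF 0 v) :=
    gaussianReal_of_var_ne_zero 0 hv.ne'
  -- Step 1: express against Lebesgue
  have step1 : ∀ h : ℝ, (∫ x, g (h + x) ∂(gaussianReal 0 v)) = ∫ x, g (h + x) * f x := by
    intro h
    rw [hμ]
    have hdens : (gaussianPDF 0 v) = fun x => ((Real.toNNReal (f x) : ℝ≥0) : ℝ≥0∞) := by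
      funext x; simp [gaussianPDF, ENNReal.ofReal, hfdef]
    rw [hdens, integral_withDensity_eq_integral_smul hfmeas.real_toNNReal (fun x => g (h + x))]
    congr 1; funext x
    simp [NNReal.smul_def, Real.coe_toNNReal _ (hfnn x), mul_comm]
  have hint' : ∀ h : ℝ, Integrable (fun x => g (h + x) * f x) := by
    intro h
    have h1 := hint h
    rw [hμ, integrable_withDensity_iff (measurable_gaussianPDF 0 v)
      (ae_of_all _ fun x => ENNReal.ofReal_lt_top)] at h1
    have : (fun x => g (h + x) * (gaussianPDF 0 v x).toReal) = fun x => g (h + x) * f x := by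
      funext x; rw [gaussianPDF, ENNReal.toReal_ofReal (hfnn x)]
    rwa [this] at h1
  have hGP : ∀ h : ℝ, Integrable (fun y => g y * f (y - h)) := by
    intro h
    simpa using (hint' h).comp_sub_right h
  have step2 : ∀ h : ℝ, (∫ x, g (h + x) * f x) = ∫ y, g y * f (y - h) := by
    intro h
    rw [← integral_add_right_eq_self (fun y => g y * f (y - h)) h]
    congr 1; funext x
    rw [add_sub_cancel_right, add_comm]
  have feven : ∀ x, f (-x) = f x := by
    intro x; simp [hfdef, gaussianPDFReal, sub_zero]
  -- representation over (0, ∞)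
  have hrepr : ∀ h : ℝ, (∫ x, g (h + x) ∂(gaussianReal 0 v))
      = ∫ y in Set.Ioi (0:ℝ), g y * (f (y - h) + f (y + h)) := by
    intro h
    rw [step1, step2 h]
    have hI1 : Integrable (fun y => g y * f (y - h)) := hGP h
    rw [← intervalIntegral.integral_Iic_add_Ioi (b := (0:ℝ)) hI1.integrableOn hI1.integrableOn]
    have hrefl : (∫ y in Set.Iic (0:ℝ), g y * f (y - h))
        = ∫ y in Set.Ioi (0:ℝ), g y * f (y + h) := by
      have hni := integral_comp_neg_Iic (0:ℝ) (fun y => g y * f (y + h))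
      rw [neg_zero] at hni
      rw [← hni]
      refine setIntegral_congr_fun measurableSet_Iic (fun x _ => ?_)
      show g x * f (x - h) = g (-x) * f (-x + h)
      rw [hev x]
      congr 1
      rw [← feven (x - h)]
      congr 1; ring
    rw [hrefl]
    have hI2 : Integrable (fun y => g y * f (y + h)) := by
      have := hGP (-h); simpa [sub_neg_eq_add] using this
    rw [← integral_add hI2.integrableOn hI1.integrableOn]
    refine setIntegral_congr_fun measurableSet_Ioi (fun y _ => ?_)
    ring
  -- normalization
  have hfint : Integrable f := integrable_gaussianPDFReal 0 v
  have norm1 : ∀ h : ℝ, (∫ y in Set.Ioi (0:ℝ), (f (y - h) + f (y + h))) = 1 := by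
    intro h
    have h1 : Integrable (fun y => f (y - h)) := hfint.comp_sub_right h
    have h2 : Integrable (fun y => f (y + h)) := hfint.comp_add_right h
    rw [integral_add h1.integrableOn h2.integrableOn]
    have e2 : (∫ y in Set.Ioi (0:ℝ), f (y + h)) = ∫ y in Set.Iic (0:ℝ), f (y - h) := by
      have hni := integral_comp_neg_Ioi (0:ℝ) (fun y => f (y - h))
      rw [neg_zero] at hni
      rw [← hni]
      refine setIntegral_congr_fun measurableSet_Ioi (fun x _ => ?_)
      show f (x + h) = f (-x - h)
      rw [← feven (x + h)]
      congr 1; ring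
    rw [e2, add_comm, intervalIntegral.integral_Iic_add_Ioi h1.integrableOn h1.integrableOn]
    rw [integral_sub_right_eq_self f h, hfdef, integral_gaussianPDFReal_eq_one 0 hv.ne']
  -- product formula for the symmetrized density
  have hP : ∀ h y : ℝ, f (y - h) + f (y + h)
      = 2 / Real.sqrt (2 * π * v) * Real.exp (-(y^2) / (2*v))
        * (Real.exp (-(h^2) / (2*v)) * Real.cosh (h / v * y)) := by
    intro h y
    have e1 : -(y - h - 0)^2 / (2*(v:ℝ)) = -(y^2)/(2*v) + (-(h^2)/(2*v) + h/v*y) := by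
      field_simp; ring
    have e2 : -(y + h - 0)^2 / (2*(v:ℝ)) = -(y^2)/(2*v) + (-(h^2)/(2*v) + -(h/v*y)) := by
      field_simp; ring
    simp only [hfdef, gaussianPDFReal, Real.cosh_eq]
    rw [e1, e2, Real.exp_add, Real.exp_add, Real.exp_add, Real.exp_add]
    ring
  -- core antitone property on [0, ∞)
  have core : ∀ h₁ h₂ : ℝ, 0 ≤ h₁ → h₁ ≤ h₂ →
      (∫ x, g (h₂ + x) ∂(gaussianReal 0 v)) ≤ ∫ x, g (h₁ + x) ∂(gaussianReal 0 v) := by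
    intro h₁ h₂ hh1 hh12
    rcases eq_or_lt_of_le hh12 with rfl | hlt
    · exact le_refl _
    set A := Real.exp (-(h₁^2) / (2*(v:ℝ))) with hA
    set B := Real.exp (-(h₂^2) / (2*(v:ℝ))) with hB
    set a := h₁ / (v:ℝ) with ha
    set b := h₂ / (v:ℝ) with hb
    have hBpos : 0 < B := Real.exp_pos _
    have hBA : B ≤ A := by
      rw [hA, hB, Real.exp_le_exp]
      have h2v : (0:ℝ) < 2*(v:ℝ) := by positivity
      rw [div_le_div_iff₀ h2v h2v]
      nlinarith [mul_le_mul hh12 hh12 hh1 (le_trans hh1 hh12), hv0]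
    have hanneg : 0 ≤ a := by rw [ha]; positivity
    have habs : a < b := by
      rw [ha, hb, div_lt_div_iff₀ hv0 hv0]
      nlinarith
    obtain ⟨y₀, hy₀0, hpos, hneg⟩ := crossing' hBpos hBA hanneg habs
    -- integrability of pieces on (0, ∞)
    have hGQ : ∀ h : ℝ, Integrable (fun y => g y * f (y + h)) := by
      intro h
      have := hGP (-h); simpa [sub_neg_eq_add] using this
    have int1 : IntegrableOn (fun y => g y * (f (y - h₁) + f (y + h₁))) (Set.Ioi (0:ℝ)) := by
      have : Integrable (fun y => g y * (f (y - h₁) + f (y + h₁))) := by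
        have := (hGP h₁).add (hGQ h₁)
        simp only [mul_add]; exact this
      exact this.integrableOn
    have int2 : IntegrableOn (fun y => g y * (f (y - h₂) + f (y + h₂))) (Set.Ioi (0:ℝ)) := by
      have : Integrable (fun y => g y * (f (y - h₂) + f (y + h₂))) := by
        have := (hGP h₂).add (hGQ h₂)
        simp only [mul_add]; exact this
      exact this.integrableOn
    have Pint : ∀ h : ℝ, IntegrableOn (fun y => f (y - h) + f (y + h)) (Set.Ioi (0:ℝ)) := by
      intro h
      exact (((integrable_gaussianPDFReal 0 v).comp_sub_right h).add
        ((integrable_gaussianPDFReal 0 v).comp_add_right h)).integrableOn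
    -- the difference of symmetrized densities, factored
    have hfac : ∀ y : ℝ, (f (y - h₁) + f (y + h₁)) - (f (y - h₂) + f (y + h₂))
        = 2 / Real.sqrt (2 * π * v) * Real.exp (-(y^2) / (2*(v:ℝ)))
          * (A * Real.cosh (a * y) - B * Real.cosh (b * y)) := by
      intro y
      rw [hP h₁ y, hP h₂ y, ← hA, ← hB]
      have ea : h₁ / (v:ℝ) * y = a * y := by rw [ha]
      have eb : h₂ / (v:ℝ) * y = b * y := by rw [hb]
      rw [ea, eb]; ring
    -- pointwise nonnegativity
    have key : 0 ≤ ∫ y in Set.Ioi (0:ℝ),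
        (g y - g y₀) * ((f (y - h₁) + f (y + h₁)) - (f (y - h₂) + f (y + h₂))) := by
      apply setIntegral_nonneg measurableSet_Ioi
      intro y hy
      have hy0 : (0:ℝ) ≤ y := le_of_lt hy
      rw [hfac y]
      have hCpos : (0:ℝ) ≤ 2 / Real.sqrt (2 * π * v) * Real.exp (-(y^2) / (2*(v:ℝ))) := by
        positivity
      rcases lt_trichotomy y y₀ with hlt' | heq | hgt
      · have hD := hpos y hy0 hlt'
        have hg : g y₀ ≤ g y := hdec (mem_Ici.mpr hy0) (mem_Ici.mpr hy₀0) hlt'.le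
        exact mul_nonneg (sub_nonneg.mpr hg) (mul_nonneg hCpos hD)
      · rw [heq]; simp
      · have hD := hneg y hgt
        have hg : g y ≤ g y₀ := hdec (mem_Ici.mpr hy₀0) (mem_Ici.mpr hy0) hgt.le
        have hn := mul_nonneg (neg_nonneg.mpr (sub_nonpos.mpr hg))
          (neg_nonneg.mpr (mul_nonpos_of_nonneg_of_nonpos hCpos hD))
        rw [neg_mul_neg] at hn
        exact hn
    -- expand by linearity
    have comb : (fun y => (g y - g y₀) *
          ((f (y - h₁) + f (y + h₁)) - (f (y - h₂) + f (y + h₂))))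
        = fun y => (g y * (f (y - h₁) + f (y + h₁)) - g y * (f (y - h₂) + f (y + h₂)))
          - (g y₀ * (f (y - h₁) + f (y + h₁)) - g y₀ * (f (y - h₂) + f (y + h₂))) := by
      funext y; ring
    have i3 : IntegrableOn (fun y => g y₀ * (f (y - h₁) + f (y + h₁))) (Set.Ioi (0:ℝ)) :=
      (Pint h₁).const_mul _
    have i4 : IntegrableOn (fun y => g y₀ * (f (y - h₂) + f (y + h₂))) (Set.Ioi (0:ℝ)) :=
      (Pint h₂).const_mul _
    have i12 : IntegrableOn (fun y => g y * (f (y - h₁) + f (y + h₁))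
        - g y * (f (y - h₂) + f (y + h₂))) (Set.Ioi (0:ℝ)) := int1.sub int2
    have i34 : IntegrableOn (fun y => g y₀ * (f (y - h₁) + f (y + h₁))
        - g y₀ * (f (y - h₂) + f (y + h₂))) (Set.Ioi (0:ℝ)) := i3.sub i4
    rw [comb] at key
    rw [integral_sub i12 i34, integral_sub int1 int2, integral_sub i3 i4,
      integral_const_mul (g y₀), integral_const_mul (g y₀), norm1 h₁, norm1 h₂] at key
    rw [hrepr h₁, hrepr h₂]
    linarith
  -- evenness in h
  have Ieven : ∀ h : ℝ, (∫ x, g (-h + x) ∂(gaussianReal 0 v))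
      = ∫ x, g (h + x) ∂(gaussianReal 0 v) := by
    intro h
    rw [hrepr, hrepr]
    refine setIntegral_congr_fun measurableSet_Ioi (fun y _ => ?_)
    simp only [sub_neg_eq_add]
    rw [show y + -h = y - h by ring, add_comm (f (y + h))]
  refine ⟨?_, ?_, ?_⟩
  · intro h₁ hh₁ h₂ hh₂ h12
    have hc := core (-h₂) (-h₁) (by simpa using hh₂) (by linarith)
    rwa [Ieven, Ieven] at hc
  · intro h₁ hh₁ h₂ hh₂ h12
    exact core h₁ h₂ hh₁ h12
  · intro h
    rcases le_or_gt 0 h with hh | hh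
    · exact core 0 h le_rfl hh
    · have hc := core 0 (-h) le_rfl (by linarith)
      rwa [Ieven h] at hc
end
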